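/- (Corollary, composite form.) Assume a₁ < 0, 0 > b₀ > −a₀, a₂ > a₁²/(2|b₀|), τ̄ > 0 with |b₀|τ̄² < 2a₂, and g(τ̄) < 0. Then W_r(0) > 0, W_i(0) = 0, and for every ω > 0 either W_i(ω) > 0 or W_r(ω) < 0; i.e., the curve ω ↦ (W_r(ω), W_i(ω)) starts on the positive real axis and avoids the closed fourth quadrant for all ω > 0. -/

import Mathlib

lemma sin_ge_sub_cube' {x : ℝ} (hx : 0 ≤ x) : x - x ^ 3 / 6 ≤ Real.sin x := by
  have hmono : Monotone (fun x : ℝ => Real.sin x - x + x ^ 3 / 6) := by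
    apply monotone_of_deriv_nonneg
    · fun_prop
    · intro y
      have h1 : HasDerivAt (fun x : ℝ => Real.sin x - x + x ^ 3 / 6)
          (Real.cos y - 1 + 3 * y ^ 2 / 6) y := by
        have := ((Real.hasDerivAt_sin y).sub (hasDerivAt_id y)).add
          (((hasDerivAt_pow 3 y).div_const 6))
        exact this.congr_deriv (by norm_num)
      rw [h1.deriv]
      nlinarith [Real.one_sub_sq_div_two_le_cos (x := y)]
  have := hmono hx
  simp only [Real.sin_zero] at this
  nlinarith [this]

/-- Corollary, composite form: Under the stated conditions the
curve ω ↦ (W_r(ω), W_i(ω)) starts on the positive real axis and avoids the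
closed fourth quadrant for all ω > 0. -/
theorem corollary_composite (a₀ a₁ a₂ b₀ τbar : ℝ)
    (ha₁ : a₁ < 0) (hb : b₀ < 0) (hba : -a₀ < b₀)
    (ha₂ : a₁ ^ 2 / (2 * |b₀|) < a₂)
    (hτ : 0 < τbar) (hτ2 : |b₀| * τbar ^ 2 < 2 * a₂)
    (Wr Wi g : ℝ → ℝ)
    (hWr : Wr = fun ω : ℝ => -a₂ * ω ^ 2 + a₀ + b₀ * Real.cos (ω * τbar))
    (hWi : Wi = fun ω : ℝ => -ω ^ 3 + a₁ * ω - b₀ * Real.sin (ω * τbar))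
    (hg : g = fun t : ℝ => ((a₀ + 2 * |b₀|) / 6) * t ^ 3 - (|a₁| / 2) * t ^ 2
      - a₂ * t + (|a₁| * a₂ + a₀ - |b₀|) / |b₀|)
    (hgτ : g τbar < 0) :
    0 < Wr 0 ∧ Wi 0 = 0 ∧ ∀ ω : ℝ, 0 < ω → 0 < Wi ω ∨ Wr ω < 0 := by
  have hB : (0:ℝ) < -b₀ := by linarith
  have habs : |b₀| = -b₀ := abs_of_neg hb
  have habs1 : |a₁| = -a₁ := abs_of_neg ha₁
  set B := -b₀ with hBdef
  clear_value B
  rw [habs, habs1] at hg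
  rw [habs] at hτ2
  subst hg
  -- turn g τbar < 0 into a polynomial inequality
  have hgB : B * (((a₀ + 2 * B) / 6) * τbar ^ 3 - (-a₁ / 2) * τbar ^ 2
      - a₂ * τbar + (-a₁ * a₂ + a₀ - B) / B) < 0 :=
    mul_neg_of_pos_of_neg hB hgτ
  have hBdiv : B * ((-a₁ * a₂ + a₀ - B) / B) = -a₁ * a₂ + a₀ - B := by
    field_simp
  have hkey : (a₀ - B) * (1 + B * τbar ^ 3 / 6)
      < (B * τbar + a₁) * (a₂ - B * τbar ^ 2 / 2) := by
    nlinarith [hgB, hBdiv]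
  refine ⟨?_, ?_, ?_⟩
  · rw [hWr]; simp; linarith
  · rw [hWi]; simp
  · intro ω hω
    by_cases hc : ω ^ 2 * (1 + B * τbar ^ 3 / 6) < B * τbar + a₁
    · left
      rw [hWi]
      have hs := sin_ge_sub_cube' (x := ω * τbar) (by positivity)
      have hs' := mul_le_mul_of_nonneg_left hs hB.le
      have hprod : 0 < ω * ((B * τbar + a₁) - ω ^ 2 * (1 + B * τbar ^ 3 / 6)) :=
        mul_pos hω (by linarith)
      simp only
      rw [show b₀ = -B by rw [hBdef]; ring]
      nlinarith [hs', hprod]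
    · right
      rw [hWr]
      push_neg at hc
      have hd2 : 0 < a₂ - B * τbar ^ 2 / 2 := by linarith
      have hd1 : (0:ℝ) < 1 + B * τbar ^ 3 / 6 := by positivity
      have h1 : (a₀ - B) * (1 + B * τbar ^ 3 / 6)
          < ω ^ 2 * (1 + B * τbar ^ 3 / 6) * (a₂ - B * τbar ^ 2 / 2) := by
        calc (a₀ - B) * (1 + B * τbar ^ 3 / 6)
            < (B * τbar + a₁) * (a₂ - B * τbar ^ 2 / 2) := hkey
          _ ≤ ω ^ 2 * (1 + B * τbar ^ 3 / 6) * (a₂ - B * τbar ^ 2 / 2) :=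
              mul_le_mul_of_nonneg_right hc hd2.le
      have h2 : a₀ - B < ω ^ 2 * (a₂ - B * τbar ^ 2 / 2) := by
        nlinarith [h1, hd1]
      have hcos := Real.one_sub_sq_div_two_le_cos (x := ω * τbar)
      have hcos' := mul_le_mul_of_nonneg_left hcos hB.le
      simp only
      rw [show b₀ = -B by rw [hBdef]; ring]
      nlinarith [hcos', h2]
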